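/- arXiv:1901.05328 — 2 statements merged into one kernel-verified Lean document; each statement's English description precedes it below -/
import Mathlib

section
/- Let f(t) = ∑_{n≥0} P_n(z,q) t^n be the formal power series defined by f(t) = ∑_{j=0}^{∞} t^{2j}(1+t) q^{2j²} (tzq;q²)_j (tq/z;q²)_j / (t²;q²)_{2j+1}. Then for n ≥ 4 the coefficients satisfy the fourth-order recurrence P_n = (1-q²)P_{n-1} + (2q² + q^{2n-2})P_{n-2} + (q⁴ - q² - (z + z⁻¹)q^{2n-3})P_{n-3} + (q^{2n-4} - q⁴)P_{n-4}. -/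
open Finset PowerSeries

/-- The `j`-th term of the series
`f(t) = ∑_j t^{2j}(1+t) q^{2j²} (tzq;q²)_j (tq/z;q²)_j / (t²;q²)_{2j+1}`,
as a formal power series in `t` over the field `K` (think of `K = ℚ(z,q)`). -/
noncomputable def fTerm {K : Type*} [Field K] (z q : K) (j : ℕ) : PowerSeries K :=
  (PowerSeries.X : PowerSeries K) ^ (2*j) * (1 + PowerSeries.X)
    * PowerSeries.C (q ^ (2*j^2))
    * (∏ k ∈ range j, (1 - PowerSeries.X * PowerSeries.C (z * q ^ (2*k+1))))
    * (∏ k ∈ range j, (1 - PowerSeries.X * PowerSeries.C (q ^ (2*k+1) / z)))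
    * (∏ k ∈ range (2*j+1), (1 - PowerSeries.X ^ 2 * PowerSeries.C (q ^ (2*k))))⁻¹

/-- `P n = P_n(z,q)`, the coefficient of `t^n` in `f(t)`.  Since the `j`-th term of
`f` is divisible by `t^{2j}`, only the terms with `j ≤ n` contribute to the
coefficient of `t^n`, so the truncated finite sum gives the honest coefficient. -/
noncomputable def fCoeff {K : Type*} [Field K] (z q : K) (n : ℕ) : K :=
  PowerSeries.coeff n (∑ j ∈ range (n+1), fTerm z q j)

section Helpers

variable {K : Type*} [Field K]

lemma rescale_C' (a c : K) : rescale a (C c) = C c := by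
  ext n
  simp only [coeff_rescale, coeff_C]
  split_ifs with h
  · subst h; simp
  · exact mul_zero _

lemma rescale_inv' (a : K) (φ : PowerSeries K) (h : constantCoeff φ ≠ 0) :
    rescale a (φ⁻¹) = (rescale a φ)⁻¹ := by
  have h2 : constantCoeff (rescale a φ) ≠ 0 := by
    simpa [← coeff_zero_eq_constantCoeff, coeff_rescale] using h
  rw [PowerSeries.eq_inv_iff_mul_eq_one h2, ← map_mul, PowerSeries.inv_mul_cancel φ h]
  exact map_one _

lemma rescale_prod_lin (a : K) (m d : ℕ) (g : ℕ → K) :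
    rescale a (∏ k ∈ range m, (1 - X^d * C (g k)))
      = ∏ k ∈ range m, (1 - X^d * C (g k * a^d)) := by
  rw [map_prod]
  refine prod_congr rfl fun k _ => ?_
  rw [map_sub, map_one, map_mul, map_pow, rescale_X, rescale_C', mul_pow, ← map_pow, map_mul]
  ring

lemma rescale_prod_lin1 (a : K) (m : ℕ) (g : ℕ → K) :
    rescale a (∏ k ∈ range m, (1 - X * C (g k)))
      = ∏ k ∈ range m, (1 - X * C (g k * a)) := by
  have := rescale_prod_lin a m 1 g
  simpa using this

lemma constCoeff_D (g : ℕ → K) (m : ℕ) :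
    constantCoeff (∏ k ∈ range m, (1 - X^2 * C (g k))) = 1 := by
  rw [map_prod]
  simp [constantCoeff_X]

lemma rescale_fTerm (z q : K) (j : ℕ) :
    rescale (q^2) (fTerm z q j) =
      X ^ (2*j) * C ((q^2)^(2*j)) * (1 + X * C (q^2)) * C (q ^ (2*j^2))
        * (∏ k ∈ range j, (1 - X * C (z * q^(2*k+1) * q^2)))
        * (∏ k ∈ range j, (1 - X * C (q^(2*k+1) / z * q^2)))
        * (∏ k ∈ range (2*j+1), (1 - X^2 * C (q^(2*k) * (q^2)^2)))⁻¹ := by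
  rw [fTerm, map_mul, map_mul, map_mul, map_mul, map_mul,
      rescale_inv' _ _ (by rw [constCoeff_D]; exact one_ne_zero),
      rescale_prod_lin, rescale_prod_lin1, rescale_prod_lin1,
      map_pow, rescale_X, map_add, map_one, rescale_X, mul_pow, ← map_pow]
  simp only [rescale_C']
  ring

lemma prod_shift1 (z q : K) (m : ℕ) :
    ∏ k ∈ range (m+1), (1 - X * C (z * q^(2*k+1)))
      = (1 - X * C (z*q)) * ∏ k ∈ range m, (1 - X * C (z * q^(2*k+1) * q^2)) := by
  rw [prod_range_succ', mul_comm]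
  congr 1
  · norm_num
  · exact prod_congr rfl fun k _ => by rw [show z*q^(2*(k+1)+1) = z*q^(2*k+1)*q^2 by ring]

lemma prod_shift2 (z q : K) (m : ℕ) :
    ∏ k ∈ range (m+1), (1 - X * C (q^(2*k+1) / z))
      = (1 - X * C (q/z)) * ∏ k ∈ range m, (1 - X * C (q^(2*k+1) / z * q^2)) := by
  rw [prod_range_succ', mul_comm]
  congr 1
  · norm_num
  · exact prod_congr rfl fun k _ => by rw [show q^(2*(k+1)+1)/z = q^(2*k+1)/z*q^2 by ring]

lemma prod_shiftD (q : K) (j : ℕ) :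
    ∏ k ∈ range (2*(j+1)+1), (1 - X^2 * C (q^(2*k)))
      = (1 - X^2) * (1 - X^2 * C (q^2)) * ∏ k ∈ range (2*j+1), (1 - X^2 * C (q^(2*k) * (q^2)^2)) := by
  rw [show 2*(j+1)+1 = (2*j+1)+1+1 by ring, prod_range_succ', prod_range_succ']
  rw [show (2*(0+1):ℕ) = 2 by norm_num, show (2*0:ℕ) = 0 by norm_num, pow_zero, map_one, mul_one]
  rw [show (∏ k ∈ range (2*j+1), (1 - X^2 * C (q^(2*(k+1+1)))))
      = ∏ k ∈ range (2*j+1), (1 - X^2 * C (q^(2*k) * (q^2)^2))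
    from prod_congr rfl fun k _ => by rw [show q^(2*(k+1+1)) = q^(2*k)*(q^2)^2 by ring]]
  ring

lemma div_transfer (A B U V W : PowerSeries K) (hU : U * U⁻¹ = 1) (hV : V * V⁻¹ = 1)
    (hUV : U = W * V) (h : A = B * W) : A * U⁻¹ = B * V⁻¹ := by
  calc A * U⁻¹ = B * W * U⁻¹ * (V * V⁻¹) := by rw [h, hV, mul_one]
    _ = B * V⁻¹ * (W * V) * U⁻¹ := by ring
    _ = B * V⁻¹ * (U * U⁻¹) := by rw [← hUV]; ring
    _ = B * V⁻¹ := by rw [hU, mul_one]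

lemma key (z q : K) (j : ℕ) :
    (1 - X) * (1 + X * C (q^2)) * (1 - X^2 * C (q^2)) * fTerm z q (j+1)
      = C (q^2) * X^2 * (1 - X * C (z*q)) * (1 - X * C (q/z))
          * rescale (q^2) (fTerm z q j) := by
  rw [rescale_fTerm, fTerm, prod_shift1, prod_shift2]
  set U := ∏ k ∈ range (2*(j+1)+1), (1 - X^2 * C (q^(2*k))) with hUdef
  set V := ∏ k ∈ range (2*j+1), (1 - X^2 * C (q^(2*k) * (q^2)^2)) with hVdef
  set P1 := ∏ k ∈ range j, (1 - X * C (z*q^(2*k+1)*q^2)) with hP1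
  set P2 := ∏ k ∈ range j, (1 - X * C (q^(2*k+1)/z*q^2)) with hP2
  have hU : U * U⁻¹ = 1 :=
    PowerSeries.mul_inv_cancel _ (by rw [hUdef, constCoeff_D]; exact one_ne_zero)
  have hV : V * V⁻¹ = 1 :=
    PowerSeries.mul_inv_cancel _ (by rw [hVdef, constCoeff_D]; exact one_ne_zero)
  have hUV : U = (1 - X^2) * (1 - X^2 * C (q^2)) * V := prod_shiftD q j
  have hC : (C (q^(2*(j+1)^2)) : PowerSeries K)
      = C (q^2) * C ((q^2)^(2*j)) * C (q^(2*j^2)) := by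
    rw [← map_mul, ← map_mul]
    congr 1
    ring
  have h : (1-X)*(1+X*C (q^2))*(1-X^2*C (q^2))
        * (X^(2*(j+1)) * (1+X) * C (q^(2*(j+1)^2)) * ((1-X*C (z*q))*P1)
            * ((1-X*C (q/z))*P2))
      = (C (q^2)*X^2*(1-X*C (z*q))*(1-X*C (q/z))
          * (X^(2*j) * C ((q^2)^(2*j)) * (1+X*C (q^2)) * C (q^(2*j^2)) * P1 * P2))
        * ((1 - X^2) * (1 - X^2 * C (q^2))) := by
    rw [hC]
    ring
  have := div_transfer _ _ _ _ _ hU hV hUV h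
  linear_combination this

lemma base (z q : K) : (1 - X) * fTerm z q 0 = 1 := by
  have h0 : fTerm z q 0 = (1+X) * ((1 - X^2 : PowerSeries K))⁻¹ := by
    simp [fTerm, prod_range_one]
  rw [h0, ← mul_assoc, show ((1:PowerSeries K)-X)*(1+X) = 1 - X^2 by ring,
    PowerSeries.mul_inv_cancel]
  simp [constantCoeff_X]

noncomputable def fSum (z q : K) (n : ℕ) : PowerSeries K := ∑ j ∈ range (n+1), fTerm z q j

lemma funeq (z q : K) (n : ℕ) (hn : 1 ≤ n) :
    (1 - X) * (1 + X * C (q^2)) * (1 - X^2 * C (q^2)) * fSum z q n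
      = (1 + X * C (q^2)) * (1 - X^2 * C (q^2))
        + C (q^2) * X^2 * (1 - X * C (z*q)) * (1 - X * C (q/z))
            * rescale (q^2) (fSum z q (n-1)) := by
  have hrn : n - 1 + 1 = n := Nat.succ_pred_eq_of_pos hn
  have expand : ∀ S : PowerSeries K,
      (1-X)*(1+X*C (q^2))*(1-X^2*C (q^2)) * (S + fTerm z q 0)
        = (1+X*C (q^2))*(1-X^2*C (q^2))*((1-X)*fTerm z q 0)
          + (1-X)*(1+X*C (q^2))*(1-X^2*C (q^2))*S := fun S => by ring
  rw [fSum, sum_range_succ', expand, base, mul_one]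
  congr 1
  rw [fSum, hrn, map_sum, Finset.mul_sum, Finset.mul_sum]
  exact Finset.sum_congr rfl fun j _ => key z q j

lemma coeff_fTerm_eq_zero (z q : K) {m j : ℕ} (h : m < 2*j) :
    coeff m (fTerm z q j) = 0 := by
  rw [fTerm, show (X:PowerSeries K)^(2*j) * (1 + X)
      * C (q ^ (2*j^2))
      * (∏ k ∈ range j, (1 - X * C (z * q ^ (2*k+1))))
      * (∏ k ∈ range j, (1 - X * C (q ^ (2*k+1) / z)))
      * (∏ k ∈ range (2*j+1), (1 - X ^ 2 * C (q ^ (2*k))))⁻¹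
    = X^(2*j) * ((1 + X) * C (q ^ (2*j^2))
      * (∏ k ∈ range j, (1 - X * C (z * q ^ (2*k+1))))
      * (∏ k ∈ range j, (1 - X * C (q ^ (2*k+1) / z)))
      * (∏ k ∈ range (2*j+1), (1 - X ^ 2 * C (q ^ (2*k))))⁻¹) by ring,
    coeff_X_pow_mul', if_neg (by omega)]

lemma coeff_fSum (z q : K) {m M : ℕ} (h : m ≤ M) :
    coeff m (fSum z q M) = fCoeff z q m := by
  rw [fCoeff, fSum, map_sum, map_sum]
  exact (Finset.sum_subset (by simpa using Nat.succ_le_succ h)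
    (fun j _ hj => coeff_fTerm_eq_zero z q (by simp at hj; omega))).symm


end Helpers

/-- The coefficients `P_n(z,q)` of `f(t)` satisfy, for `n ≥ 4`, the fourth-order
recurrence
`P_n = (1-q²)P_{n-1} + (2q²+q^{2n-2})P_{n-2} + (q⁴-q²-(z+z⁻¹)q^{2n-3})P_{n-3}
      + (q^{2n-4}-q⁴)P_{n-4}`. -/
theorem fCoeff_recurrence {K : Type*} [Field K] (z q : K) (hz : z ≠ 0)
    (n : ℕ) (hn : 4 ≤ n) :
    fCoeff z q n =
      (1 - q^2) * fCoeff z q (n-1) + (2*q^2 + q^(2*n-2)) * fCoeff z q (n-2)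
        + (q^4 - q^2 - (z + z⁻¹) * q^(2*n-3)) * fCoeff z q (n-3)
        + (q^(2*n-4) - q^4) * fCoeff z q (n-4) := by
  have hfe := funeq z q n (by omega)
  set G := rescale (q^2) (fSum z q (n-1)) with hGdef
  have hzz : (C z) * C z⁻¹ = 1 := by
    rw [← map_mul, mul_inv_cancel₀ hz, map_one]
  have hA : (1 - X) * (1+X*C (q^2)) * (1-X^2*C (q^2)) * fSum z q n
      = fSum z q n + X^1 * C (q^2-1) * fSum z q n + X^2 * C (-(2*q^2)) * fSum z q n
        + X^3 * C (q^2 - q^4) * fSum z q n + X^4 * C (q^4) * fSum z q n := by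
    simp only [map_sub, map_neg, map_mul, map_pow, map_one, map_ofNat]
    ring
  have hE : (1+X*C (q^2)) * (1-X^2*C (q^2))
      = (1 : PowerSeries K) + X^1 * C (q^2) * 1 + X^2 * C (-(q^2)) * 1
        + X^3 * C (-(q^4)) * 1 := by
    simp only [map_neg, map_pow, mul_one]
    ring
  have hB : C (q^2) * X^2 * (1 - X*C (z*q)) * (1 - X*C (q/z)) * G
      = X^2 * C (q^2) * G + X^3 * C (-(q^3*(z+z⁻¹))) * G + X^4 * C (q^4) * G := by
    rw [div_eq_mul_inv]
    simp only [map_mul, map_add, map_pow, map_neg]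
    linear_combination (X^4 * (C q)^4 * G) * hzz
  rw [hA, hB, hE] at hfe
  have H := congrArg (coeff n) hfe
  have hshift : ∀ (c : K) (k : ℕ) (φ : PowerSeries K), k ≤ n →
      coeff n (X^k * C c * φ) = c * coeff (n-k) φ := by
    intro c k φ hk
    rw [mul_assoc, coeff_X_pow_mul', if_pos hk, coeff_C_mul]
  simp only [map_add] at H
  rw [hshift (q^2-1) 1 (fSum z q n) (by omega),
      hshift (-(2*q^2)) 2 (fSum z q n) (by omega),
      hshift (q^2-q^4) 3 (fSum z q n) (by omega),
      hshift (q^4) 4 (fSum z q n) (by omega),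
      hshift (q^2) 1 1 (by omega),
      hshift (-(q^2)) 2 1 (by omega),
      hshift (-(q^4)) 3 1 (by omega),
      hshift (q^2) 2 G (by omega),
      hshift (-(q^3*(z+z⁻¹))) 3 G (by omega),
      hshift (q^4) 4 G (by omega),
      coeff_fSum z q (le_refl n),
      coeff_fSum z q (show n-1 ≤ n by omega),
      coeff_fSum z q (show n-2 ≤ n by omega),
      coeff_fSum z q (show n-3 ≤ n by omega),
      coeff_fSum z q (show n-4 ≤ n by omega),
      hGdef, coeff_rescale, coeff_rescale, coeff_rescale,
      coeff_fSum z q (show n-2 ≤ n-1 by omega),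
      coeff_fSum z q (show n-3 ≤ n-1 by omega),
      coeff_fSum z q (show n-4 ≤ n-1 by omega),
      PowerSeries.coeff_one, if_neg (show ¬ n = 0 by omega)] at H
  have c1 : (1:K) = 1 := rfl
  have hone : ∀ m : ℕ, m ≠ 0 → (coeff m (1 : PowerSeries K)) = 0 := by
    intro m hm; rw [PowerSeries.coeff_one, if_neg hm]
  rw [hone (n-1) (by omega), hone (n-2) (by omega), hone (n-3) (by omega)] at H
  have e2 : q^(2*n-2) = q^2 * (q^2)^(n-2) := by
    rw [← pow_mul, ← pow_add]; congr 1; omega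
  have e3 : q^(2*n-3) = q^3 * (q^2)^(n-3) := by
    rw [← pow_mul, ← pow_add]; congr 1; omega
  have e4 : q^(2*n-4) = q^4 * (q^2)^(n-4) := by
    rw [← pow_mul, ← pow_add]; congr 1; omega
  rw [e2, e3, e4]
  linear_combination H
end

section
/- For every n ≥ 0, ∑_{j=0}^{n} z^j q^{j²} qbinom(n,j;q) = ∑_{j=0}^{n} (-1)^j z^{2j} q^{j(5j-1)/2} (1 - z q^{2j}) qbinom(n,j;q) / (zq^j;q)_{n+1}, as an identity of rational functions in z, q. -/
open Finset

/-- The Gaussian binomial coefficient `[n choose k]_q`. -/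
def gb {K : Type*} [CommRing K] (q : K) : ℕ → ℕ → K
  | _, 0 => 1
  | 0, _+1 => 0
  | n+1, k+1 => gb q n k + q ^ (k+1) * gb q n (k+1)

/-- The Gaussian binomial coefficient with integer arguments: it vanishes
unless `0 ≤ B ≤ A`. -/
def gbZ {K : Type*} [CommRing K] (q : K) (A B : ℤ) : K :=
  if 0 ≤ B ∧ B ≤ A then gb q A.toNat B.toNat else 0

/-- The modified Gaussian binomial coefficient: equals `1` when `A = -1` and
`B = 0`, and the ordinary Gaussian binomial coefficient otherwise. -/
def gbS {K : Type*} [CommRing K] (q : K) (A B : ℤ) : K :=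
  if A = -1 ∧ B = 0 then 1 else gbZ q A B

section RRaux

variable {K : Type*} [CommRing K]

lemma gb_zero (q : K) : ∀ n k, n < k → gb q n k = 0 := by
  intro n
  induction n with
  | zero => intro k hk; match k, hk with
            | k+1, _ => rfl
  | succ n ih =>
      intro k hk
      match k, hk with
      | k+1, hk =>
        show gb q n k + q^(k+1) * gb q n (k+1) = 0
        rw [ih k (by omega), ih (k+1) (by omega)]
        ring

lemma gb_absorb (q : K) : ∀ n j, (1 - q^(j+1)) * gb q n (j+1) = (1 - q^(n-j)) * gb q n j := by
  intro n
  induction n with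
  | zero =>
      intro j
      show (1 - q^(j+1)) * (0:K) = (1 - q^(0-j)) * gb q 0 j
      simp [Nat.zero_sub]
  | succ n ih =>
      intro j
      match j with
      | 0 =>
        show (1 - q^1) * (gb q n 0 + q^1 * gb q n 1) = (1 - q^(n+1)) * gb q (n+1) 0
        have h0 : gb q n 0 = 1 := by cases n <;> rfl
        have h1 : (1 - q^(0+1)) * gb q n (0+1) = (1 - q^(n-0)) * gb q n 0 := ih 0
        simp only [h0, Nat.sub_zero, mul_one] at h1
        show (1 - q^1) * (gb q n 0 + q^1 * gb q n 1) = (1 - q^(n+1)) * gb q (n+1) 0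
        have h2 : gb q (n+1) 0 = 1 := rfl
        rw [h0, h2]
        have : (1 - q^1) * (1 + q^1*gb q n 1) = (1-q^1) + q^1 * ((1 - q^(0+1)) * gb q n (0+1)) := by
          ring_nf
        rw [this, h1, pow_succ]
        ring
      | k+1 =>
        show (1 - q^(k+2)) * (gb q n (k+1) + q^(k+2) * gb q n (k+2))
            = (1 - q^(n+1-(k+1))) * gb q (n+1) (k+1)
        have hrec : gb q (n+1) (k+1) = gb q n k + q^(k+1) * gb q n (k+1) := rfl
        rcases le_or_gt (k+1) n with hle | hlt
        · have e1 : (1 - q^(k+2)) * gb q n (k+2) = (1 - q^(n-(k+1))) * gb q n (k+1) := ih (k+1)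
          have e2 : (1 - q^(k+1)) * gb q n (k+1) = (1 - q^(n-k)) * gb q n k := ih k
          have hq1 : q^(k+2) * q^(n-(k+1)) = q^(n+1) := by
            rw [← pow_add]; congr 1; omega
          have hq2 : q^(k+1) * q^(n-k) = q^(n+1) := by
            rw [← pow_add]; congr 1; omega
          have hsub : n+1-(k+1) = n-k := by omega
          rw [hsub, hrec]
          have lhs_eq : (1 - q^(k+2)) * (gb q n (k+1) + q^(k+2) * gb q n (k+2))
              = (1 - q^(n+1)) * gb q n (k+1) := by
            have : (1 - q^(k+2)) * (gb q n (k+1) + q^(k+2) * gb q n (k+2))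
                = (1 - q^(k+2)) * gb q n (k+1) + q^(k+2) * ((1 - q^(k+2)) * gb q n (k+2)) := by ring
            rw [this, e1, ← hq1]; ring
          have rhs_eq : (1 - q^(n-k)) * (gb q n k + q^(k+1) * gb q n (k+1))
              = (1 - q^(n+1)) * gb q n (k+1) := by
            have : (1 - q^(n-k)) * (gb q n k + q^(k+1) * gb q n (k+1))
                = (1 - q^(n-k)) * gb q n k + q^(k+1) * ((1 - q^(n-k)) * gb q n (k+1)) := by ring
            rw [this, ← e2, ← hq2]; ring
          rw [lhs_eq, rhs_eq]
        · have z1 : gb q n (k+1) = 0 := gb_zero q n (k+1) (by omega)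
          have z2 : gb q n (k+2) = 0 := gb_zero q n (k+2) (by omega)
          rw [z1, z2, hrec, z1]
          rcases Nat.lt_or_ge n k with h' | h'
          · have : gb q n k = 0 := gb_zero q n k h'
            rw [this]; ring
          · have hnk : n = k := by omega
            have : n+1-(k+1) = 0 := by omega
            rw [this]; simp

lemma exp_succ (j : ℕ) : (j+1)*(5*(j+1)-1)/2 = j*(5*j-1)/2 + (5*j+2) := by
  have hd1 : 2 ∣ j*(5*j-1) := by
    rcases Nat.even_or_odd j with he | ho
    · exact Dvd.dvd.mul_right he.two_dvd _
    · obtain ⟨c, rfl⟩ := ho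
      have : Even (5*(2*c+1)-1) := ⟨5*c+2, by omega⟩
      exact Dvd.dvd.mul_left this.two_dvd _
  have key : (j+1)*(5*(j+1)-1) = j*(5*j-1) + 2*(5*j+2) := by
    cases j with
    | zero => decide
    | succ k =>
      have h1 : 5*(k+1+1)-1 = 5*k+9 := by omega
      have h2 : 5*(k+1)-1 = 5*k+4 := by omega
      rw [h1, h2]; ring
  omega

end RRaux

section RRfield

variable {K : Type*} [Field K]

/-- `Dd z q a m = ∏_{k<m} (1 - z q^{a+k})`. -/
def Dd (z q : K) (a m : ℕ) : K := ∏ k ∈ range m, (1 - z * q ^ (a + k))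

lemma Dd_peel (z q : K) (a m : ℕ) : Dd z q a (m+1) = (1 - z*q^a) * Dd z q (a+1) m := by
  rw [Dd, prod_range_succ', Dd]
  rw [show a + 0 = a from rfl, mul_comm]
  congr 1
  refine prod_congr rfl fun k _ => ?_
  rw [show a + 1 + k = a + (k+1) by omega]

lemma Dd_top (z q : K) (a m : ℕ) : Dd z q a (m+1) = Dd z q a m * (1 - z*q^(a+m)) := by
  rw [Dd, prod_range_succ, Dd]

lemma Dd_ne (z q : K) (h : ∀ m : ℕ, z * q ^ m ≠ 1) (a m : ℕ) : Dd z q a m ≠ 0 := by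
  rw [Dd]
  refine prod_ne_zero_iff.mpr fun k _ => sub_ne_zero.mpr fun he => h (a+k) he.symm

lemma prod_Dd (z q : K) (a m : ℕ) :
    ∏ k ∈ range m, (1 - z * q^a * q^k) = Dd z q a m := by
  refine prod_congr rfl fun k _ => ?_
  rw [pow_add, mul_assoc]

lemma prod_Dd1 (z q : K) (a m : ℕ) :
    ∏ k ∈ range m, (1 - z*q * q^a * q^k) = Dd z q (a+1) m := by
  refine prod_congr rfl fun k _ => ?_
  rw [show a+1+k = 1+(a+k) by omega, pow_add, pow_add, pow_one]
  ring_nf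

lemma prod_Dd2 (z q : K) (a m : ℕ) :
    ∏ k ∈ range m, (1 - z*q^2 * q^a * q^k) = Dd z q (a+2) m := by
  refine prod_congr rfl fun k _ => ?_
  rw [show a+2+k = 2+(a+k) by omega, pow_add, pow_add]
  ring_nf

lemma key_core (z q A C Q : K)
    (hu : 1 - z*A ≠ 0) (hv : 1 - z*A*q ≠ 0) (hw : 1 - z*A^2*C*q^2 ≠ 0) (hQ : Q ≠ 0) :
    A*(1 - z*A^2) / ((1-z*A)*((1-z*A*q)*Q))
      - z^2*A^5*q^2*(1 - z*A^2*q^2) / ((1-z*A*q)*(Q*(1-z*A^2*C*q^2)))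
    = A^2*(1 - z*A^2*q) / ((1-z*A*q)*Q)
      + z*q*A^4*(1 - z*A^2*q^2) / (Q*(1-z*A^2*C*q^2))
      + (A*(1-A) / ((1-z*A)*((1-z*A*q)*Q))
         + z^2*A^6*q^3*(1-C) / ((1-z*A*q)*(Q*(1-z*A^2*C*q^2)))) := by
  set u := 1 - z*A with hu'
  set v := 1 - z*A*q with hv'
  set w := 1 - z*A^2*C*q^2 with hw'
  have hD : u*(v*(w*Q)) ≠ 0 := mul_ne_zero hu (mul_ne_zero hv (mul_ne_zero hw hQ))
  have e1 : A*(1 - z*A^2) / (u*(v*Q)) = (A*(1 - z*A^2)*w) / (u*(v*(w*Q))) := by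
    rw [div_eq_div_iff (mul_ne_zero hu (mul_ne_zero hv hQ)) hD]; ring
  have e2 : z^2*A^5*q^2*(1 - z*A^2*q^2) / (v*(Q*w))
      = (z^2*A^5*q^2*(1 - z*A^2*q^2)*u) / (u*(v*(w*Q))) := by
    rw [div_eq_div_iff (mul_ne_zero hv (mul_ne_zero hQ hw)) hD]; ring
  have e3 : A^2*(1 - z*A^2*q) / (v*Q) = (A^2*(1 - z*A^2*q)*(u*w)) / (u*(v*(w*Q))) := by
    rw [div_eq_div_iff (mul_ne_zero hv hQ) hD]; ring
  have e4 : z*q*A^4*(1 - z*A^2*q^2) / (Q*w) = (z*q*A^4*(1 - z*A^2*q^2)*(u*v)) / (u*(v*(w*Q))) := by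
    rw [div_eq_div_iff (mul_ne_zero hQ hw) hD]; ring
  have e5 : A*(1-A) / (u*(v*Q)) = (A*(1-A)*w) / (u*(v*(w*Q))) := by
    rw [div_eq_div_iff (mul_ne_zero hu (mul_ne_zero hv hQ)) hD]; ring
  have e6 : z^2*A^6*q^3*(1-C) / (v*(Q*w)) = (z^2*A^6*q^3*(1-C)*u) / (u*(v*(w*Q))) := by
    rw [div_eq_div_iff (mul_ne_zero hv (mul_ne_zero hQ hw)) hD]; ring
  rw [e1, e2, e3, e4, e5, e6, div_sub_div_same, ← add_div, ← add_div, ← add_div]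
  congr 1
  rw [hu', hv', hw']
  ring

set_option maxHeartbeats 1000000 in
lemma term_eq (z q : K) (h : ∀ m : ℕ, z * q ^ m ≠ 1) (n j : ℕ) (hj : j ≤ n) :
    (-1:K)^j * z^(2*j) * q^(j*(5*j-1)/2) * (1 - z*q^(2*j)) * q^j * gb q n j / Dd z q j (n+2)
      + (-1:K)^(j+1) * z^(2*(j+1)) * q^((j+1)*(5*(j+1)-1)/2) * (1 - z*q^(2*(j+1))) * gb q n j
          / Dd z q (j+1) (n+2)
    = (-1:K)^j * (z*q)^(2*j) * q^(j*(5*j-1)/2) * (1 - z*q*q^(2*j)) * gb q n j / Dd z q (j+1) (n+1)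
      + z*q*((-1:K)^j * (z*q^2)^(2*j) * q^(j*(5*j-1)/2) * (1 - z*q^2*q^(2*j)) * gb q n j
          / Dd z q (j+2) (n+1))
      + ((-1:K)^j * z^(2*j) * q^(j*(5*j-1)/2) * q^j * ((1 - q^j) * gb q n j) / Dd z q j (n+2)
         - (-1:K)^(j+1) * z^(2*(j+1)) * q^((j+1)*(5*(j+1)-1)/2) * q^(j+1)
             * ((1 - q^(j+1)) * gb q n (j+1)) / Dd z q (j+1) (n+2)) := by
  have hne : ∀ m : ℕ, (1:K) - z*q^m ≠ 0 := fun m => sub_ne_zero.mpr fun he => h m he.symm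
  have hD1 : Dd z q j (n+2) = (1 - z*q^j) * ((1 - z*q^(j+1)) * Dd z q (j+2) n) := by
    rw [Dd_peel, Dd_peel]
  have hD2 : Dd z q (j+1) (n+2) = (1 - z*q^(j+1)) * (Dd z q (j+2) n * (1 - z*q^(j+2+n))) := by
    rw [Dd_peel, Dd_top]
  have hD3 : Dd z q (j+1) (n+1) = (1 - z*q^(j+1)) * Dd z q (j+2) n := by rw [Dd_peel]
  have hD4 : Dd z q (j+2) (n+1) = Dd z q (j+2) n * (1 - z*q^(j+2+n)) := Dd_top z q (j+2) n
  have hE : q^((j+1)*(5*(j+1)-1)/2) = q^(j*(5*j-1)/2) * ((q^j)^5*q^2) := by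
    rw [exp_succ, pow_add, pow_add, show 5*j = j*5 by ring, pow_mul]
  have h2j : q^(2*j) = (q^j)^2 := by rw [show 2*j = j*2 by ring, pow_mul]
  have h2j1 : q^(2*(j+1)) = (q^j)^2*q^2 := by
    rw [show 2*(j+1) = j*2+2 by ring, pow_add, pow_mul]
  have hz2 : z^(2*(j+1)) = z^(2*j)*z^2 := by rw [show 2*(j+1) = 2*j+2 by ring, pow_add]
  have hjq : q^(j+1) = q^j*q := pow_succ q j
  have hzq : (z*q)^(2*j) = z^(2*j)*(q^j)^2 := by rw [mul_pow, h2j]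
  have hzq2 : (z*q^2)^(2*j) = z^(2*j)*(q^j)^4 := by
    rw [mul_pow]; congr 1; rw [← pow_mul, show 2*(2*j) = j*4 by ring, pow_mul]
  have hsn : q^(j+2+n) = (q^j)^2*q^(n-j)*q^2 := by
    rw [show j+2+n = j*2 + (n-j) + 2 by omega, pow_add, pow_add, pow_mul]
  have hsgn : (-1:K)^(j+1) = -(-1:K)^j := by rw [pow_succ]; ring
  have hu : (1:K) - z*q^j ≠ 0 := hne j
  have hv : (1:K) - z*q^j*q ≠ 0 := by
    have := hne (j+1); rw [hjq, ← mul_assoc] at this; exact this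
  have hw : (1:K) - z*(q^j)^2*q^(n-j)*q^2 ≠ 0 := by
    have := hne (j+2+n); rw [hsn] at this
    simpa [mul_assoc] using this
  have hQ : Dd z q (j+2) n ≠ 0 := Dd_ne z q h (j+2) n
  rw [gb_absorb, hD1, hD2, hD3, hD4, hE, h2j, h2j1, hz2, hjq, hzq, hzq2, hsn, hsgn]
  have KC := key_core z q (q^j) (q^(n-j)) (Dd z q (j+2) n) hu hv hw hQ
  linear_combination ((-1:K)^j * z^(2*j) * q^(j*(5*j-1)/2) * gb q n j) * KC

set_option maxHeartbeats 1000000 in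
lemma step (z q : K) (h : ∀ m : ℕ, z * q ^ m ≠ 1) (n : ℕ) :
    ∑ j ∈ range (n+2), ((-1:K)^j * z^(2*j) * q^(j*(5*j-1)/2) * (1 - z*q^(2*j)) * gb q (n+1) j
        / ∏ k ∈ range (n+2), (1 - z*q^j*q^k))
    = ∑ j ∈ range (n+1), ((-1:K)^j * (z*q)^(2*j) * q^(j*(5*j-1)/2) * (1 - z*q*q^(2*j)) * gb q n j
        / ∏ k ∈ range (n+1), (1 - z*q*q^j*q^k))
      + z*q * ∑ j ∈ range (n+1), ((-1:K)^j * (z*q^2)^(2*j) * q^(j*(5*j-1)/2)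
            * (1 - z*q^2*q^(2*j)) * gb q n j
        / ∏ k ∈ range (n+1), (1 - z*q^2*q^j*q^k)) := by
  have hgb1 : gb q n 0 = 1 := by cases n <;> rfl
  simp only [prod_Dd2, prod_Dd1, prod_Dd]
  rw [sum_range_succ']
  have hsplit : ∀ i ∈ range (n+1),
      (-1:K)^(i+1) * z^(2*(i+1)) * q^((i+1)*(5*(i+1)-1)/2) * (1 - z*q^(2*(i+1)))
          * gb q (n+1) (i+1) / Dd z q (i+1) (n+2)
      = (-1:K)^(i+1) * z^(2*(i+1)) * q^((i+1)*(5*(i+1)-1)/2) * (1 - z*q^(2*(i+1)))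
          * gb q n i / Dd z q (i+1) (n+2)
        + (-1:K)^(i+1) * z^(2*(i+1)) * q^((i+1)*(5*(i+1)-1)/2) * (1 - z*q^(2*(i+1)))
          * (q^(i+1) * gb q n (i+1)) / Dd z q (i+1) (n+2) := by
    intro i _
    rw [show gb q (n+1) (i+1) = gb q n i + q^(i+1) * gb q n (i+1) from rfl]
    ring
  rw [sum_congr rfl hsplit, sum_add_distrib, add_assoc]
  have heq : (∑ i ∈ range (n+1), (-1:K)^(i+1) * z^(2*(i+1)) * q^((i+1)*(5*(i+1)-1)/2)
          * (1 - z*q^(2*(i+1))) * (q^(i+1) * gb q n (i+1)) / Dd z q (i+1) (n+2))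
        + (-1:K)^0 * z^(2*0) * q^(0*(5*0-1)/2) * (1 - z*q^(2*0)) * gb q (n+1) 0
          / Dd z q 0 (n+2)
      = ∑ j ∈ range (n+1), (-1:K)^j * z^(2*j) * q^(j*(5*j-1)/2) * (1 - z*q^(2*j)) * q^j
          * gb q n j / Dd z q j (n+2) := by
    rw [sum_range_succ, sum_range_succ' (fun j => (-1:K)^j * z^(2*j) * q^(j*(5*j-1)/2)
        * (1 - z*q^(2*j)) * q^j * gb q n j / Dd z q j (n+2)) n]
    rw [gb_zero q n (n+1) (by omega)]
    congr 1
    · simp only [mul_zero, zero_div, add_zero]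
      exact sum_congr rfl fun i _ => by ring
    · rw [show gb q (n+1) 0 = 1 from rfl, hgb1]
      norm_num
  rw [heq]
  rw [← sum_add_distrib, mul_sum, ← sum_add_distrib]
  have tele : ∑ j ∈ range (n+1),
      ((-1:K)^j * z^(2*j) * q^(j*(5*j-1)/2) * q^j * ((1 - q^j) * gb q n j) / Dd z q j (n+2)
        - (-1:K)^(j+1) * z^(2*(j+1)) * q^((j+1)*(5*(j+1)-1)/2) * q^(j+1)
            * ((1 - q^(j+1)) * gb q n (j+1)) / Dd z q (j+1) (n+2)) = 0 := by
    rw [sum_range_sub' (fun j => (-1:K)^j * z^(2*j) * q^(j*(5*j-1)/2) * q^j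
        * ((1 - q^j) * gb q n j) / Dd z q j (n+2)) (n+1)]
    rw [gb_zero q n (n+1) (by omega)]
    norm_num
  calc ∑ i ∈ range (n+1),
        ((-1:K)^(i+1) * z^(2*(i+1)) * q^((i+1)*(5*(i+1)-1)/2) * (1 - z*q^(2*(i+1)))
            * gb q n i / Dd z q (i+1) (n+2)
          + (-1:K)^i * z^(2*i) * q^(i*(5*i-1)/2) * (1 - z*q^(2*i)) * q^i * gb q n i
            / Dd z q i (n+2))
      = ∑ j ∈ range (n+1),
          (((-1:K)^j * (z*q)^(2*j) * q^(j*(5*j-1)/2) * (1 - z*q*q^(2*j)) * gb q n j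
              / Dd z q (j+1) (n+1)
            + z*q*((-1:K)^j * (z*q^2)^(2*j) * q^(j*(5*j-1)/2) * (1 - z*q^2*q^(2*j)) * gb q n j
              / Dd z q (j+2) (n+1)))
           + ((-1:K)^j * z^(2*j) * q^(j*(5*j-1)/2) * q^j * ((1 - q^j) * gb q n j)
              / Dd z q j (n+2)
             - (-1:K)^(j+1) * z^(2*(j+1)) * q^((j+1)*(5*(j+1)-1)/2) * q^(j+1)
              * ((1 - q^(j+1)) * gb q n (j+1)) / Dd z q (j+1) (n+2))) := by
        refine sum_congr rfl fun j hj => ?_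
        rw [add_comm]
        exact term_eq z q h n j (by simpa using Nat.lt_succ_iff.mp (mem_range.mp hj))
    _ = _ := by
        rw [sum_add_distrib, tele, add_zero, sum_add_distrib]

lemma stepL (z q : K) (n : ℕ) :
    ∑ j ∈ range (n+2), z^j * q^(j^2) * gb q (n+1) j
    = ∑ j ∈ range (n+1), (z*q)^j * q^(j^2) * gb q n j
      + z*q * ∑ j ∈ range (n+1), (z*q^2)^j * q^(j^2) * gb q n j := by
  have hgb1 : gb q n 0 = 1 := by cases n <;> rfl
  rw [sum_range_succ']
  have hsplit : ∀ i ∈ range (n+1),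
      z^(i+1) * q^((i+1)^2) * gb q (n+1) (i+1)
      = z^(i+1) * q^((i+1)^2) * gb q n i + z^(i+1) * q^((i+1)^2) * (q^(i+1) * gb q n (i+1)) := by
    intro i _
    rw [show gb q (n+1) (i+1) = gb q n i + q^(i+1) * gb q n (i+1) from rfl]
    ring
  rw [sum_congr rfl hsplit, sum_add_distrib, add_assoc]
  have h1 : ∑ i ∈ range (n+1), z^(i+1) * q^((i+1)^2) * gb q n i
      = z*q * ∑ j ∈ range (n+1), (z*q^2)^j * q^(j^2) * gb q n j := by
    rw [mul_sum]
    refine sum_congr rfl fun i _ => ?_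
    rw [mul_pow, ← pow_mul, show (i+1)^2 = i^2 + 2*i + 1 by ring, pow_add, pow_add, pow_succ z]
    ring
  have h2 : (∑ i ∈ range (n+1), z^(i+1) * q^((i+1)^2) * (q^(i+1) * gb q n (i+1)))
        + z^0 * q^(0^2) * gb q (n+1) 0
      = ∑ j ∈ range (n+1), (z*q)^j * q^(j^2) * gb q n j := by
    rw [sum_range_succ, sum_range_succ' (fun j => (z*q)^j * q^(j^2) * gb q n j) n,
        gb_zero q n (n+1) (by omega)]
    simp only [mul_zero, zero_div, add_zero]
    congr 1
    · refine sum_congr rfl fun i _ => ?_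
      rw [mul_pow]
      ring
    · rw [show gb q (n+1) 0 = 1 from rfl, hgb1]
      norm_num
  rw [h1, h2, add_comm]

lemma rr_aux (q : K) : ∀ (n : ℕ) (z : K), (∀ m : ℕ, z * q ^ m ≠ 1) →
    ∑ j ∈ range (n+1), z^j * q^(j^2) * gb q n j =
      ∑ j ∈ range (n+1),
        (-1 : K)^j * z^(2*j) * q^(j*(5*j-1)/2) * (1 - z*q^(2*j)) * gb q n j
          / ∏ k ∈ range (n+1), (1 - z * q^j * q^k) := by
  intro n
  induction n with
  | zero =>
      intro z hz
      have hz1 : (1:K) - z ≠ 0 := sub_ne_zero.mpr fun he => hz 0 (by rw [pow_zero, mul_one, ← he])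
      simp [show gb q 0 0 = (1:K) from rfl]
      rw [div_self hz1]
  | succ n ih =>
      intro z hz
      have hz1 : ∀ m : ℕ, (z*q) * q ^ m ≠ 1 := fun m => by
        rw [mul_assoc, ← pow_succ']; exact hz (m+1)
      have hz2 : ∀ m : ℕ, (z*q^2) * q ^ m ≠ 1 := fun m => by
        rw [mul_assoc, ← pow_add]; exact hz (2+m)
      show ∑ j ∈ range (n+2), z^j * q^(j^2) * gb q (n+1) j
        = ∑ j ∈ range (n+2),
            (-1 : K)^j * z^(2*j) * q^(j*(5*j-1)/2) * (1 - z*q^(2*j)) * gb q (n+1) j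
              / ∏ k ∈ range (n+2), (1 - z * q^j * q^k)
      rw [stepL, ih (z*q) hz1, ih (z*q^2) hz2, step z q hz n]

end RRfield

/-- The finite Rogers–Ramanujan polynomial identity (Andrews, Bressoud, et al.):
`∑_{j=0}^n z^j q^{j²} [n,j]_q
  = ∑_{j=0}^n (-1)^j z^{2j} q^{j(5j-1)/2} (1-zq^{2j}) [n,j]_q / (zq^j;q)_{n+1}`,
stated over any field in which the denominators are nonzero (so it holds as an
identity of rational functions in `z` and `q`). -/
theorem finite_rogers_ramanujan {K : Type*} [Field K] (z q : K)
    (h : ∀ m : ℕ, z * q ^ m ≠ 1) (n : ℕ) :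
    ∑ j ∈ range (n+1), z^j * q^(j^2) * gb q n j =
      ∑ j ∈ range (n+1),
        (-1 : K)^j * z^(2*j) * q^(j*(5*j-1)/2) * (1 - z*q^(2*j)) * gb q n j
          / ∏ k ∈ range (n+1), (1 - z * q^j * q^k) := by
  exact rr_aux q n z h
end
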